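/- Let E be a directed graph that contains no cycles and has only finitely many splitting pairs of edges. Then for any vertices v and w of E there are at most finitely many finite paths with source w and range v. -/

import Mathlib

/-- A directed graph: countable sets of vertices and edges, with range and source
maps. -/
structure DGraph : Type 1 where
  V : Type
  E : Type
  countableV : Countable V
  countableE : Countable E
  r : E → V
  s : E → V

namespace DGraph

/-- `E` is row-finite: every vertex receives only finitely many edges. -/
def RowFinite (G : DGraph) : Prop := ∀ v : G.V, {e : G.E | G.r e = v}.Finite

/-- A source of `E`: a vertex receiving no edges. -/
def IsSource (G : DGraph) (v : G.V) : Prop := ∀ e : G.E, G.r e ≠ v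

end DGraph

/-- A (finite or infinite) path in the directed graph `G`.  `edge i` is the
`(i+1)`-st edge of the path (or `none` beyond the end of the path); once `none`
always `none`, so a path is either a vertex (`rng`, with no edges), a finite path,
or an infinite path.  Edges are composed so that `s(edge i) = r(edge (i+1))`. -/
structure LPath (G : DGraph) where
  rng : G.V
  edge : ℕ → Option G.E
  edge_closed : ∀ i, edge i = none → edge (i + 1) = none
  rng_compat : ∀ e, edge 0 = some e → G.r e = rng
  compat : ∀ i e f, edge i = some e → edge (i + 1) = some f → G.s e = G.r f

namespace LPath

variable {G : DGraph}

/-- The vertex `x(n)` of the path `x` (a junk value, the range, beyond the length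
of the path). -/
def vert (x : LPath G) : ℕ → G.V
  | 0 => x.rng
  | n + 1 =>
    match x.edge n with
    | some e => G.s e
    | none => x.rng

/-- `x` is an infinite path, i.e. a member of `E^∞`. -/
def Infinite (x : LPath G) : Prop := ∀ i, (x.edge i).isSome

/-- `n ≤ |x|`: the first `n` edges of `x` all exist. -/
def LeLen (x : LPath G) (n : ℕ) : Prop := ∀ i, i < n → (x.edge i).isSome

/-- `|x| = n`: `x` is a finite path of length `n`. -/
def LenEq (x : LPath G) (n : ℕ) : Prop := x.edge n = none ∧ x.LeLen n

theorem vert_eq (x : LPath G) (m : ℕ) (e : G.E) (h : x.edge m = some e) :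
    G.r e = x.vert m := by
  cases m with
  | zero => exact x.rng_compat e h
  | succ n =>
    cases hn : x.edge n with
    | none => exact absurd h (by simp [x.edge_closed n hn])
    | some f =>
      have hc := x.compat n f e hn h
      simp only [vert, hn]
      exact hc.symm

/-- The shifted path `σ^m(x)` (meaningful when `m ≤ |x|`). -/
def shift (x : LPath G) (m : ℕ) : LPath G where
  rng := x.vert m
  edge i := x.edge (m + i)
  edge_closed i h := x.edge_closed (m + i) h
  rng_compat e he := x.vert_eq m e he
  compat i e f he hf := x.compat (m + i) e f he hf

/-- `x` is shift equivalent to `y` with lag `n ∈ ℤ`: there are `p, q ∈ ℕ` with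
`p - q = n`, `p ≤ |x|`, `q ≤ |y|` and `σ^p(x) = σ^q(y)`. -/
def ShiftEquivLag (x y : LPath G) (n : ℤ) : Prop :=
  ∃ p q : ℕ, (p : ℤ) - (q : ℤ) = n ∧ x.LeLen p ∧ y.LeLen q ∧ x.shift p = y.shift q

/-- `x` is shift equivalent to `y`. -/
def ShiftEquiv (x y : LPath G) : Prop := ∃ n : ℤ, ShiftEquivLag x y n

/-- `x` belongs to `E^{≤∞}`: it is infinite, or finite with its source a source
of the graph. -/
def Boundary (x : LPath G) : Prop :=
  x.Infinite ∨ ∃ n : ℕ, x.LenEq n ∧ G.IsSource (x.vert n)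

/-- `x` is frequently divertable to `[y]`: for every `n ≤ |x|` there is a path in
`x(n)E^{≤∞}` that is shift equivalent to `y`. -/
def FreqDiv (x y : LPath G) : Prop :=
  ∀ n : ℕ, x.LeLen n → ∃ z : LPath G, z.Boundary ∧ z.rng = x.vert n ∧ ShiftEquiv z y

/-- The segment `x(m, n)` of `x` is a cycle: it is closed (`x(m) = x(n)`) and the
sources `x(i)`, `m < i ≤ n`, of its edges are pairwise distinct. -/
def HasCycleAt (x : LPath G) (m n : ℕ) : Prop :=
  m < n ∧ x.LeLen n ∧ x.vert m = x.vert n ∧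
    ∀ i j, m < i → i ≤ n → m < j → j ≤ n → x.vert i = x.vert j → i = j

/-- `x` contains a cycle. -/
def ContainsCycle (x : LPath G) : Prop := ∃ m n, x.HasCycleAt m n

end LPath

/-- A cycle in `G`: a finite path `α = α_1 ⋯ α_len` (here 0-indexed, and with junk
values of `edge` beyond `len`) of non-zero length with `r(α) = s(α)` and whose edges
have pairwise distinct sources. -/
structure DCycle (G : DGraph) where
  len : ℕ
  len_pos : 0 < len
  edge : ℕ → G.E
  compat : ∀ i, i + 1 < len → G.s (edge i) = G.r (edge (i + 1))
  closed : G.s (edge (len - 1)) = G.r (edge 0)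
  distinct : ∀ i j, i < len → j < len → G.s (edge i) = G.s (edge j) → i = j

namespace DCycle

variable {G : DGraph}

/-- `f` is an entry to the cycle `c`: `r(f) = r(c_i)` and `f ≠ c_i` for some `i`. -/
def IsEntry (c : DCycle G) (f : G.E) : Prop :=
  ∃ i, i < c.len ∧ G.r f = G.r (c.edge i) ∧ f ≠ c.edge i

/-- The edge `f` lies in the cycle `c`. -/
def EdgeMem (c : DCycle G) (f : G.E) : Prop := ∃ i, i < c.len ∧ c.edge i = f

end DCycle

section Stmt18Aux

open List

variable {G : DGraph}

/-- A forward chain of edges starting at `u`: sources chain along ranges. -/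
def Wk (G : DGraph) : G.V → List G.E → Prop
  | _, [] => True
  | u, e :: l => G.s e = u ∧ Wk G (G.r e) l

/-- Endpoint of a forward chain starting at `u`. -/
def endV (G : DGraph) : G.V → List G.E → G.V
  | u, [] => u
  | _, e :: l => endV G (G.r e) l

/-- The `j`-th vertex along the chain. -/
def vertAt (G : DGraph) (u : G.V) (l : List G.E) (j : ℕ) : G.V :=
  endV G u (l.take j)

lemma endV_append (u : G.V) (l1 l2 : List G.E) :
    endV G u (l1 ++ l2) = endV G (endV G u l1) l2 := by
  induction l1 generalizing u with
  | nil => rfl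
  | cons e l ih => simp [endV, ih]

lemma wk_append {u : G.V} {l1 l2 : List G.E} :
    Wk G u (l1 ++ l2) ↔ Wk G u l1 ∧ Wk G (endV G u l1) l2 := by
  induction l1 generalizing u with
  | nil => simp [Wk, endV]
  | cons e l ih => simp [Wk, endV, ih, and_assoc]

lemma vertAt_zero (u : G.V) (l : List G.E) : vertAt G u l 0 = u := rfl

lemma vertAt_length (u : G.V) (l : List G.E) : vertAt G u l l.length = endV G u l := by
  simp [vertAt]

lemma srcAt {l : List G.E} {u : G.V} (hw : Wk G u l) :
    ∀ j (h : j < l.length), G.s (l[j]) = vertAt G u l j := by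
  induction l generalizing u with
  | nil => intro j h; simp at h
  | cons e l ih =>
    intro j h
    cases j with
    | zero => simpa [vertAt, endV] using hw.1
    | succ j =>
      have := ih hw.2 j (by simpa using Nat.lt_of_succ_lt_succ h)
      simpa [vertAt, endV] using this

lemma rngAt {l : List G.E} {u : G.V} (hw : Wk G u l) :
    ∀ j (h : j < l.length), G.r (l[j]) = vertAt G u l (j + 1) := by
  induction l generalizing u with
  | nil => intro j h; simp at h
  | cons e l ih =>
    intro j h
    cases j with
    | zero => simp [vertAt, endV]
    | succ j =>
      have := ih hw.2 j (by simpa using Nat.lt_of_succ_lt_succ h)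
      simpa [vertAt, endV] using this

lemma closed_subchain {u : G.V} {l : List G.E} (hw : Wk G u l) {a b : ℕ} (hab : a < b)
    (hb : b ≤ l.length) (hv : vertAt G u l a = vertAt G u l b) :
    ∃ (u' : G.V) (l' : List G.E), l' ≠ [] ∧ l'.length = b - a ∧ Wk G u' l' ∧
      endV G u' l' = u' := by
  refine ⟨vertAt G u l a, (l.take b).drop a, ?_, ?_, ?_, ?_⟩
  · have : ((l.take b).drop a).length = b - a := by
      simp [Nat.min_eq_left hb]
    intro hnil
    rw [hnil] at this
    simp at this
    omega
  · simp [Nat.min_eq_left hb]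
  · have h1 : Wk G u (l.take b) := by
      have := (wk_append (u := u) (l1 := l.take b) (l2 := l.drop b)).1
      rw [List.take_append_drop] at this
      exact (this hw).1
    have h2 : l.take b = (l.take b).take a ++ (l.take b).drop a := by
      rw [List.take_append_drop]
    have h3 : (l.take b).take a = l.take a := by
      rw [List.take_take, Nat.min_eq_left (Nat.le_of_lt hab)]
    rw [h2, wk_append, h3] at h1
    exact h1.2
  · have h2 : l.take b = (l.take b).take a ++ (l.take b).drop a := by
      rw [List.take_append_drop]
    have h3 : (l.take b).take a = l.take a := by
      rw [List.take_take, Nat.min_eq_left (Nat.le_of_lt hab)]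
    have key : endV G (vertAt G u l a) ((l.take b).drop a) = endV G u (l.take b) := by
      conv_rhs => rw [h2]
      rw [endV_append, h3]
      rfl
    rw [key, hv]
    rfl

/-- In a graph with no cycles, there is no nonempty closed chain. -/
lemma noclosed (hnc : IsEmpty (DCycle G)) :
    ∀ (u : G.V) (l : List G.E), Wk G u l → endV G u l = u → l = [] := by
  by_contra hcon
  push_neg at hcon
  obtain ⟨u0, l0, hw0, he0, hne0⟩ := hcon
  classical
  have hP : ∃ n, ∃ (u : G.V) (l : List G.E), Wk G u l ∧ endV G u l = u ∧ l ≠ [] ∧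
      l.length = n := ⟨l0.length, u0, l0, hw0, he0, hne0, rfl⟩
  set N := Nat.find hP with hN
  obtain ⟨u, l, hw, he, hne, hlen⟩ := Nat.find_spec hP
  have hNpos : 0 < N := by rw [hN, ← hlen]; exact List.length_pos_iff.2 hne
  -- vertices `vertAt u l j`, `0 ≤ j < N`, are pairwise distinct
  have hdist : ∀ a b, a < b → b < N → vertAt G u l a ≠ vertAt G u l b := by
    intro a b hab hbN hv
    obtain ⟨u', l', hne', hlen', hw', he'⟩ :=
      closed_subchain hw hab (by omega) hv
    have hlt : b - a < N := by omega
    exact Nat.find_min hP hlt ⟨u', l', hw', he', hne', hlen'⟩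
  have hd : l ≠ [] := hne
  refine hnc.false ?_
  refine ⟨N, hNpos, fun i => l.getD (N - 1 - i) (l.head hd), ?_, ?_, ?_⟩
  · intro i hi
    have h1 : N - 1 - i < l.length := by omega
    have h2 : N - 1 - (i + 1) < l.length := by omega
    rw [List.getD_eq_getElem _ _ h1, List.getD_eq_getElem _ _ h2,
      srcAt hw _ h1, rngAt hw _ h2]
    congr 1
    omega
  · have h1 : N - 1 - (N - 1) < l.length := by omega
    have h2 : N - 1 - 0 < l.length := by omega
    rw [List.getD_eq_getElem _ _ h1, List.getD_eq_getElem _ _ h2,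
      srcAt hw _ h1, rngAt hw _ h2]
    have e1 : N - 1 - (N - 1) = 0 := by omega
    have e2 : N - 1 - 0 + 1 = N := by omega
    rw [e1, e2, vertAt_zero, hN, ← hlen, vertAt_length, he]
  · intro i j hi hj hsij
    have h1 : N - 1 - i < l.length := by omega
    have h2 : N - 1 - j < l.length := by omega
    rw [List.getD_eq_getElem _ _ h1, List.getD_eq_getElem _ _ h2,
      srcAt hw _ h1, srcAt hw _ h2] at hsij
    by_contra hij
    rcases Nat.lt_trichotomy (N - 1 - i) (N - 1 - j) with h | h | h
    · exact hdist _ _ h (by omega) hsij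
    · omega
    · exact hdist _ _ h (by omega) hsij.symm

lemma vert_inj (hnc : IsEmpty (DCycle G)) {u : G.V} {l : List G.E} (hw : Wk G u l)
    {a b : ℕ} (hab : a < b) (hb : b ≤ l.length) : vertAt G u l a ≠ vertAt G u l b := by
  intro hv
  obtain ⟨u', l', hne', _, hw', he'⟩ := closed_subchain hw hab hb hv
  exact hne' (noclosed hnc u' l' hw' he')

lemma wk_nodup (hnc : IsEmpty (DCycle G)) {u : G.V} {l : List G.E} (hw : Wk G u l) :
    l.Nodup := by
  rw [List.nodup_iff_injective_get]
  intro i j hij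
  have h1 : G.s (l.get i) = vertAt G u l i.1 := by
    simpa [List.get_eq_getElem] using srcAt hw i.1 i.2
  have h2 : G.s (l.get j) = vertAt G u l j.1 := by
    simpa [List.get_eq_getElem] using srcAt hw j.1 j.2
  have h3 : vertAt G u l i.1 = vertAt G u l j.1 := by rw [← h1, ← h2, hij]
  rcases Nat.lt_trichotomy i.1 j.1 with h | h | h
  · exact absurd h3 (vert_inj hnc hw h (Nat.le_of_lt j.2))
  · exact Fin.ext h
  · exact absurd h3.symm (vert_inj hnc hw h (Nat.le_of_lt i.2))

/-- A chain from `w` to `v` is determined by its sublist of splitting edges. -/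
lemma filter_inj (hnc : IsEmpty (DCycle G)) (p : G.E → Bool)
    (hp : ∀ e f : G.E, e ≠ f → G.s e = G.s f → p e = true ∧ p f = true) (v : G.V) :
    ∀ (l1 l2 : List G.E) (u : G.V), Wk G u l1 → Wk G u l2 →
      endV G u l1 = v → endV G u l2 = v → l1.filter p = l2.filter p → l1 = l2 := by
  intro l1
  induction l1 with
  | nil =>
    intro l2 u hw1 hw2 he1 he2 hf
    cases l2 with
    | nil => rfl
    | cons f l2 =>
      exfalso
      have hu : u = v := he1
      have : f :: l2 = [] := noclosed hnc u (f :: l2) hw2 (by rw [he2, hu])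
      simp at this
  | cons e l1 ih =>
    intro l2 u hw1 hw2 he1 he2 hf
    cases l2 with
    | nil =>
      exfalso
      have hu : u = v := he2
      have : e :: l1 = [] := noclosed hnc u (e :: l1) hw1 (by rw [he1, hu])
      simp at this
    | cons f l2 =>
      have hef : e = f := by
        by_contra hef
        obtain ⟨hpe, hpf⟩ := hp e f hef (hw1.1.trans hw2.1.symm)
        rw [List.filter_cons_of_pos hpe, List.filter_cons_of_pos hpf] at hf
        exact hef (List.cons_eq_cons.mp hf).1
      subst hef
      have htl : l1.filter p = l2.filter p := by
        by_cases hpe : p e = true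
        · rw [List.filter_cons_of_pos hpe, List.filter_cons_of_pos hpe] at hf
          exact (List.cons_eq_cons.mp hf).2
        · rw [List.filter_cons_of_neg (by simpa using hpe),
            List.filter_cons_of_neg (by simpa using hpe)] at hf
          exact hf
      have := ih l2 (G.r e) hw1.2 hw2.2 he1 he2 htl
      rw [this]

lemma finite_lists (T : Set G.E) (hT : T.Finite) (N : ℕ) :
    {l : List G.E | (∀ e ∈ l, e ∈ T) ∧ l.length ≤ N}.Finite := by
  haveI := hT.to_subtype
  have hF : {l : List T | l.length ≤ N}.Finite := List.finite_length_le _ N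
  have himg := hF.image (List.map (Subtype.val : T → G.E))
  refine himg.subset ?_
  rintro l ⟨hmem, hlen⟩
  refine ⟨l.attach.map (fun x => (⟨x.1, hmem x.1 x.2⟩ : T)), by simpa using hlen, ?_⟩
  rw [List.map_map]
  simp

/-- The list of the first `n` edges of a path, in forward order (from the source
towards the range). -/
def fwd {G : DGraph} (f : ℕ → Option G.E) : ℕ → List G.E
  | 0 => []
  | n + 1 => (f n).elim [] (fun e => e :: fwd f n)

lemma fwd_length {x : LPath G} : ∀ n, x.LeLen n → (fwd x.edge n).length = n := by
  intro n
  induction n with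
  | zero => intro _; rfl
  | succ n ih =>
    intro h
    obtain ⟨e, he⟩ := Option.isSome_iff_exists.1 (h n (Nat.lt_succ_self n))
    have hle : x.LeLen n := fun i hi => h i (Nat.lt_succ_of_lt hi)
    simp [fwd, he, ih hle]

lemma fwd_wk (x : LPath G) : ∀ n, x.LeLen n →
    Wk G (x.vert n) (fwd x.edge n) ∧ endV G (x.vert n) (fwd x.edge n) = x.rng := by
  intro n
  induction n with
  | zero => intro _; exact ⟨trivial, rfl⟩
  | succ n ih =>
    intro h
    have hle : x.LeLen n := fun i hi => h i (Nat.lt_succ_of_lt hi)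
    obtain ⟨e, he⟩ := Option.isSome_iff_exists.1 (h n (Nat.lt_succ_self n))
    have hv1 : x.vert (n + 1) = G.s e := by simp [LPath.vert, he]
    have hr : G.r e = x.vert n := x.vert_eq n e he
    have hfwd : fwd x.edge (n + 1) = e :: fwd x.edge n := by simp [fwd, he]
    obtain ⟨ihw, ihe⟩ := ih hle
    constructor
    · rw [hfwd]
      show G.s e = x.vert (n + 1) ∧ Wk G (G.r e) (fwd x.edge n)
      exact ⟨hv1.symm, by rw [hr]; exact ihw⟩
    · rw [hfwd]
      show endV G (G.r e) (fwd x.edge n) = x.rng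
      rw [hr]; exact ihe

lemma fwd_edges_eq {x y : LPath G} : ∀ n, x.LeLen n → y.LeLen n →
    fwd x.edge n = fwd y.edge n → ∀ i, i < n → x.edge i = y.edge i := by
  intro n
  induction n with
  | zero => intro _ _ _ i hi; omega
  | succ n ih =>
    intro hx hy hf i hi
    obtain ⟨e, he⟩ := Option.isSome_iff_exists.1 (hx n (Nat.lt_succ_self n))
    obtain ⟨f, hfe⟩ := Option.isSome_iff_exists.1 (hy n (Nat.lt_succ_self n))
    rw [show fwd x.edge (n + 1) = e :: fwd x.edge n by simp [fwd, he],
      show fwd y.edge (n + 1) = f :: fwd y.edge n by simp [fwd, hfe]] at hf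
    obtain ⟨h1, h2⟩ := List.cons_eq_cons.mp hf
    rcases Nat.lt_succ_iff_lt_or_eq.1 hi with hlt | rfl
    · exact ih (fun i hi => hx i (Nat.lt_succ_of_lt hi))
        (fun i hi => hy i (Nat.lt_succ_of_lt hi)) h2 i hlt
    · rw [he, hfe, h1]

lemma edge_none_ge {x : LPath G} {n : ℕ} (h : x.LenEq n) : ∀ i, n ≤ i → x.edge i = none := by
  have key : ∀ k, x.edge (n + k) = none := by
    intro k
    induction k with
    | zero => exact h.1
    | succ k ih => exact x.edge_closed _ ih
  intro i hi
  have : i = n + (i - n) := by omega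
  rw [this]
  exact key _

lemma lenEq_unique {x : LPath G} {n m : ℕ} (hn : x.LenEq n) (hm : x.LenEq m) : n = m := by
  rcases Nat.lt_trichotomy n m with h | h | h
  · have := hm.2 n h; rw [hn.1] at this; simp at this
  · exact h
  · have := hn.2 m h; rw [hm.1] at this; simp at this

lemma lpath_ext {x y : LPath G} (h1 : x.rng = y.rng) (h2 : ∀ i, x.edge i = y.edge i) :
    x = y := by
  cases x with | mk r e _ _ _ =>
  cases y with | mk r' e' _ _ _ =>
  dsimp at h1 h2
  subst h1
  have : e = e' := funext h2
  subst this
  rfl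

end Stmt18Aux


/-- Let `E` be a directed graph with no cycles and only finitely many splitting pairs
of edges (pairs of distinct edges with a common source).  Then for any vertices `v`
and `w` there are at most finitely many finite paths with source `w` and range `v`. -/
theorem stmt18 (G : DGraph) (hnc : IsEmpty (DCycle G))
    (hsp : {p : G.E × G.E | p.1 ≠ p.2 ∧ G.s p.1 = G.s p.2}.Finite)
    (v w : G.V) :
    {x : LPath G | x.rng = v ∧ ∃ n : ℕ, x.LenEq n ∧ x.vert n = w}.Finite := by
  classical
  set T : Set G.E := Prod.snd '' {p : G.E × G.E | p.1 ≠ p.2 ∧ G.s p.1 = G.s p.2} with hTdef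
  have hT : T.Finite := hsp.image _
  set p : G.E → Bool := fun e => decide (e ∈ T) with hpdef
  have hmemp : ∀ e : G.E, p e = true ↔ e ∈ T := by
    intro e; simp [hpdef]
  have hp : ∀ e f : G.E, e ≠ f → G.s e = G.s f → p e = true ∧ p f = true := by
    intro e f hef hs
    constructor
    · exact (hmemp e).2 ⟨(f, e), ⟨Ne.symm hef, hs.symm⟩, rfl⟩
    · exact (hmemp f).2 ⟨(e, f), ⟨hef, hs⟩, rfl⟩
  set N := hT.toFinset.card with hNdef
  have hBIG : {l : List G.E | (∀ e ∈ l, e ∈ T) ∧ l.length ≤ N}.Finite :=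
    finite_lists T hT N
  have hSLfin : {l : List G.E | Wk G w l ∧ endV G w l = v}.Finite := by
    apply Set.Finite.of_finite_image (f := fun l => l.filter p)
    · apply hBIG.subset
      rintro _ ⟨l, ⟨hw1, he1⟩, rfl⟩
      constructor
      · intro e hel
        exact (hmemp e).1 (List.of_mem_filter hel)
      · have hnd : l.Nodup := wk_nodup hnc hw1
        have hnd2 : (l.filter p).Nodup := hnd.filter p
        have hsub : (l.filter p).toFinset ⊆ hT.toFinset := by
          intro e he
          rw [List.mem_toFinset] at he
          rw [Set.Finite.mem_toFinset]
          exact (hmemp e).1 (List.of_mem_filter he)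
        calc (l.filter p).length = (l.filter p).toFinset.card :=
              (List.toFinset_card_of_nodup hnd2).symm
        _ ≤ N := Finset.card_le_card hsub
    · intro l1 h1 l2 h2 hf
      exact filter_inj hnc p hp v l1 l2 w h1.1 h2.1 h1.2 h2.2 hf
  set plen : LPath G → ℕ := fun x => if h : ∃ n, x.LenEq n then h.choose else 0 with hplen
  have hplen_spec : ∀ x : LPath G, (∃ n, x.LenEq n) → x.LenEq (plen x) := by
    intro x h
    simp only [hplen, dif_pos h]
    exact h.choose_spec
  apply Set.Finite.of_finite_image (f := fun x => fwd x.edge (plen x))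
  · apply hSLfin.subset
    rintro _ ⟨x, ⟨hrng, n, hlen, hvert⟩, rfl⟩
    have hpx : x.LenEq (plen x) := hplen_spec x ⟨n, hlen⟩
    have hpn : plen x = n := lenEq_unique hpx hlen
    obtain ⟨hw1, he1⟩ := fwd_wk x (plen x) hpx.2
    rw [hpn, hvert] at hw1 he1
    show fwd x.edge (plen x) ∈ _
    rw [hpn]
    exact ⟨hw1, by rw [he1, hrng]⟩
  · rintro x ⟨hrngx, nx, hlenx, hvx⟩ y ⟨hrngy, ny, hleny, hvy⟩ hf
    have hpx : x.LenEq (plen x) := hplen_spec x ⟨nx, hlenx⟩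
    have hpy : y.LenEq (plen y) := hplen_spec y ⟨ny, hleny⟩
    dsimp only at hf
    have hleneq : plen x = plen y := by
      have h1 := fwd_length (x := x) (plen x) hpx.2
      have h2 := fwd_length (x := y) (plen y) hpy.2
      rw [← h1, ← h2, hf]
    rw [← hleneq] at hpy hf
    apply lpath_ext (hrngx.trans hrngy.symm)
    intro i
    by_cases hi : i < plen x
    · exact fwd_edges_eq (plen x) hpx.2 hpy.2 hf i hi
    · rw [edge_none_ge hpx i (le_of_not_gt hi), edge_none_ge hpy i (le_of_not_gt hi)]
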